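/- Let Δ⁺ ⊆ Δ⁻ ⊆ ℝⁿ, where Δ⁻ is convex and Δ⁺ is closed and convex, and let C be a connected component of Δ⁻ \ Δ⁺. Then every extreme point of C ∪ Δ⁺ is an extreme point of Δ⁺ or an extreme point of Δ⁻; that is, extremePoints(C ∪ Δ⁺) ⊆ extremePoints(Δ⁺) ∪ extremePoints(Δ⁻). -/

import Mathlib

/-- Let `Δp ⊆ Δm ⊆ ℝⁿ`, where `Δm` is convex and `Δp` is closed and convex, and let `C` be the
connected component of `Δm \ Δp` containing a point `x`.  Then every extreme point of
`C ∪ Δp` is an extreme point of `Δp` or an extreme point of `Δm`.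
(Claim in the proof of Proposition 13 of the paper.) -/
theorem extremePoints_union_component_subset {n : ℕ} (Δp Δm : Set (Fin n → ℝ))
    (hΔpClosed : IsClosed Δp) (hΔp : Convex ℝ Δp) (hΔm : Convex ℝ Δm) (hsub : Δp ⊆ Δm)
    (x : Fin n → ℝ) (hx : x ∈ Δm \ Δp) :
    Set.extremePoints ℝ (connectedComponentIn (Δm \ Δp) x ∪ Δp) ⊆
      Set.extremePoints ℝ Δp ∪ Set.extremePoints ℝ Δm := by
  set C := connectedComponentIn (Δm \ Δp) x with hC
  rintro y ⟨hyS, hyext⟩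
  rcases hyS with hyC | hyP
  · -- y ∈ C : show y is extreme in Δm
    right
    have hyMP : y ∈ Δm \ Δp := connectedComponentIn_subset _ _ hyC
    refine ⟨hyMP.1, ?_⟩
    rintro a ha b hb hseg
    by_cases hab : a = b
    · subst hab
      rw [openSegment_same] at hseg
      exact hseg.symm
    · exfalso
      obtain ⟨u, v, hu, hv, huv, hyuv⟩ := hseg
      set f : ℝ → (Fin n → ℝ) := fun t => y + t • (b - a) with hf
      have hfc : Continuous f := by
        apply Continuous.add continuous_const
        exact continuous_id.smul continuous_const
      have hf0 : f 0 = y := by simp [hf]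
      -- f⁻¹ Δpᶜ is an open neighbourhood of 0
      have hopen : IsOpen (f ⁻¹' Δpᶜ) := hΔpClosed.isOpen_compl.preimage hfc
      have h0mem : (0 : ℝ) ∈ f ⁻¹' Δpᶜ := by
        simp only [Set.mem_preimage, hf0]
        exact hyMP.2
      obtain ⟨δ, hδ, hball⟩ := Metric.isOpen_iff.1 hopen 0 h0mem
      set ε : ℝ := min (δ / 2) (min u v / 2) with hε
      have hεpos : 0 < ε := by positivity
      have hεδ : ε < δ := lt_of_le_of_lt (min_le_left _ _) (by linarith)
      have hεu : ε < u := lt_of_le_of_lt (min_le_right _ _)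
        (by rcases min_le_left u v with h; have := min_le_left u v; linarith [min_le_left u v])
      have hεv : ε < v := lt_of_le_of_lt (min_le_right _ _)
        (by linarith [min_le_right u v])
      -- every f t with |t| ≤ ε lies in Δm \ Δp
      have hfmem : ∀ t : ℝ, t ∈ Set.Icc (-ε) ε → f t ∈ Δm \ Δp := by
        intro t ht
        constructor
        · have h1 : f t = (u - t) • a + (v + t) • b := by
            simp only [hf, smul_sub, sub_smul, add_smul, ← hyuv]
            abel
          rw [h1]
          refine hΔm ha hb ?_ ?_ (by linarith)
          · have := ht.2; linarith
          · have := ht.1; linarith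
        · have : t ∈ Metric.ball (0 : ℝ) δ := by
            simp only [Metric.mem_ball, Real.dist_eq, sub_zero]
            rcases abs_le.2 ⟨ht.1, ht.2⟩ with h
            calc |t| ≤ ε := abs_le.2 ⟨ht.1, ht.2⟩
              _ < δ := hεδ
          exact hball this
      -- the small segment is connected and contained in Δm \ Δp, hence in C
      have hconn : IsPreconnected (f '' Set.Icc (-ε) ε) :=
        (isPreconnected_Icc).image f hfc.continuousOn
      have hsubC : f '' Set.Icc (-ε) ε ⊆ C := by
        have hCy : connectedComponentIn (Δm \ Δp) y = C := (connectedComponentIn_eq hyC).symm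
        rw [← hCy]
        refine hconn.subset_connectedComponentIn ?_ ?_
        · exact ⟨0, ⟨by linarith, by linarith⟩, hf0⟩
        · rintro z ⟨t, ht, rfl⟩
          exact hfmem t ht
      have haC : f (-ε) ∈ C := hsubC ⟨-ε, ⟨le_refl _, by linarith⟩, rfl⟩
      have hbC : f ε ∈ C := hsubC ⟨ε, ⟨by linarith, le_refl _⟩, rfl⟩
      have hyseg : y ∈ openSegment ℝ (f (-ε)) (f ε) := by
        refine ⟨1/2, 1/2, by norm_num, by norm_num, by norm_num, ?_⟩
        simp only [hf]
        module
      have := hyext (Or.inl haC) (Or.inl hbC) hyseg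
      have hne : f (-ε) ≠ y := by
        intro h
        simp only [hf] at h
        have h2 : (-ε) • (b - a) = 0 := add_eq_left.mp h
        rcases smul_eq_zero.1 h2 with h3 | h3
        · exact (ne_of_gt hεpos) (by linarith [neg_eq_zero.1 h3])
        · exact hab (sub_eq_zero.mp h3).symm
      exact hne this
  · -- y ∈ Δp : trivially extreme in Δp
    left
    exact ⟨hyP, fun a ha b hb hseg => hyext (Or.inr ha) (Or.inr hb) hseg⟩
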